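/- Let R = k[x,y]_{(x,y)} and I_n = (x)^{⌈nπ⌉} ∩ (x,y)^{⌈2nπ⌉}. Then the saturation I_n : (x,y)^∞ equals (x)^{⌈nπ⌉}, and the length of (x)^{⌈nπ⌉}/I_n equals (⌈2nπ⌉ − ⌈nπ⌉)(⌈2nπ⌉ − ⌈nπ⌉ + 1)/2; consequently the limit of 2·λ_R((I_n : m^∞)/I_n)/n^2 as n → ∞ equals π². -/

import Mathlib

set_option synthInstance.maxHeartbeats 1000000
set_option maxHeartbeats 2000000
open MvPolynomial

noncomputable abbrev mxy (k : Type*) [Field k] : Ideal (MvPolynomial (Fin 2) k) :=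
  Ideal.span {X 0, X 1}

noncomputable abbrev Rxy (k : Type*) [Field k] [(mxy k).IsPrime] : Type _ :=
  Localization.AtPrime (mxy k)

noncomputable abbrev xx (k : Type*) [Field k] [(mxy k).IsPrime] : Rxy k :=
  algebraMap (MvPolynomial (Fin 2) k) (Rxy k) (X 0)

noncomputable abbrev yy (k : Type*) [Field k] [(mxy k).IsPrime] : Rxy k :=
  algebraMap (MvPolynomial (Fin 2) k) (Rxy k) (X 1)

/-- The saturation `I : J^∞ = ⋃ₖ (I : Jᵏ)`. -/
noncomputable def sat {A : Type*} [CommRing A] (I J : Ideal A) : Ideal A :=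
  ⨆ n : ℕ, Submodule.colon I ((J ^ n : Ideal A) : Set A)

/-- The quotient module `S/I` of two ideals (with `I ⊆ S` in the intended use). -/
noncomputable abbrev idealQuot {A : Type*} [CommRing A] (S I : Ideal A) :=
  S ⧸ (Submodule.comap S.subtype I)

/-- The length of a module, expressed as the Krull dimension of its submodule lattice. -/
noncomputable def mlength (R M : Type*) [CommRing R] [AddCommGroup M] [Module R M] : ℕ∞ :=
  WithBot.unbotD 0 (Order.krullDim (Submodule R M))

section LayerOne
variable {k : Type*} [Field k]
local notation "P" => MvPolynomial (Fin 2) k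

/-- degree of a monomial exponent -/
def degm (d : Fin 2 →₀ ℕ) : ℕ := d 0 + d 1

lemma degm_mono {d e : Fin 2 →₀ ℕ} (h : d ≤ e) : degm d ≤ degm e :=
  Nat.add_le_add (h 0) (h 1)

lemma single_add_single (d : Fin 2 →₀ ℕ) :
    Finsupp.single 0 (d 0) + Finsupp.single 1 (d 1) = d := by
  ext i
  fin_cases i <;> simp [Finsupp.single_apply]

lemma monomial_one_eq (d : Fin 2 →₀ ℕ) :
    (monomial d (1:k)) = X 0 ^ (d 0) * X 1 ^ (d 1) := by
  rw [X_pow_eq_monomial, X_pow_eq_monomial, monomial_mul, single_add_single, mul_one]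

lemma monomial_mem_mpow {d : Fin 2 →₀ ℕ} {c : ℕ} (h : c ≤ degm d) :
    (monomial d (1:k)) ∈ (mxy k) ^ c := by
  have h0 : (X 0 : P) ∈ (mxy k) := Ideal.subset_span (by simp)
  have h1 : (X 1 : P) ∈ (mxy k) := Ideal.subset_span (by simp)
  have : (monomial d (1:k)) ∈ (mxy k) ^ (degm d) := by
    rw [monomial_one_eq, degm, pow_add]
    exact Ideal.mul_mem_mul (Ideal.pow_mem_pow h0 _) (Ideal.pow_mem_pow h1 _)
  exact Ideal.pow_le_pow_right h this

lemma mpow_eq_span (c : ℕ) :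
    (mxy k) ^ c
      = Ideal.span ((fun d => monomial d (1:k)) '' {d | c ≤ degm d}) := by
  apply le_antisymm
  · induction c with
    | zero =>
      intro p _
      rw [mem_ideal_span_monomial_image]
      intro d _
      exact ⟨0, by simp [degm], (zero_le : (0 : Fin 2 →₀ ℕ) ≤ d)⟩
    | succ c ih =>
      rw [pow_succ]
      refine Ideal.mul_le.2 fun p hp q hq => ?_
      have hp' := ih hp
      rw [mem_ideal_span_monomial_image] at hp' ⊢
      intro d hd
      classical
      have hd' := MvPolynomial.support_mul p q hd
      rw [Finset.mem_add] at hd'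
      obtain ⟨dp, hdp, dq, hdq, rfl⟩ := hd'
      obtain ⟨sp, hsp, hsple⟩ := hp' dp hdp
      have hq' : ∃ i, dq i ≠ 0 := by
        have : q ∈ Ideal.span (MvPolynomial.X '' (Set.univ : Set (Fin 2)) : Set P) := by
          have : (MvPolynomial.X '' (Set.univ : Set (Fin 2)) : Set P) = {X 0, X 1} := by
            ext w
            simp only [Set.image_univ, Set.mem_range, Set.mem_insert_iff, Set.mem_singleton_iff]
            constructor
            · rintro ⟨i, rfl⟩; fin_cases i <;> simp
            · rintro (rfl | rfl); exacts [⟨0, rfl⟩, ⟨1, rfl⟩]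
          rw [this]; exact hq
        rw [mem_ideal_span_X_image] at this
        obtain ⟨i, _, hi⟩ := this dq hdq
        exact ⟨i, hi⟩
      obtain ⟨i, hi⟩ := hq'
      refine ⟨sp + Finsupp.single i 1, ?_, ?_⟩
      · simp only [Set.mem_setOf_eq, degm] at hsp ⊢
        have : 1 ≤ (Finsupp.single i (1:ℕ)) 0 + (Finsupp.single i 1) 1 := by
          fin_cases i <;> simp [Finsupp.single_apply]
        simp only [Finsupp.add_apply]
        omega
      · refine add_le_add hsple ?_
        intro j
        by_cases hij : i = j
        · subst hij; simpa [Finsupp.single_apply] using Nat.one_le_iff_ne_zero.2 hi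
        · simp [Finsupp.single_apply, hij]
  · rw [Ideal.span_le]
    rintro w ⟨d, hd, rfl⟩
    exact monomial_mem_mpow hd

lemma mem_mpow {p : P} {c : ℕ} :
    p ∈ (mxy k) ^ c ↔ ∀ d ∈ p.support, c ≤ degm d := by
  rw [mpow_eq_span, mem_ideal_span_monomial_image]
  constructor
  · intro h d hd
    obtain ⟨s, hs, hsle⟩ := h d hd
    exact le_trans hs (degm_mono hsle)
  · intro h d hd
    exact ⟨d, h d hd, le_rfl⟩

lemma mem_span_xpow {p : P} {a : ℕ} :
    p ∈ Ideal.span {(X 0 : P) ^ a} ↔ ∀ d ∈ p.support, a ≤ d 0 := by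
  have : ({(X 0 : P) ^ a} : Set P) = (fun d => monomial d (1:k)) '' {Finsupp.single 0 a} := by
    simp [X_pow_eq_monomial]
  rw [this, mem_ideal_span_monomial_image]
  constructor
  · intro h d hd
    obtain ⟨s, hs, hsle⟩ := h d hd
    rw [Set.mem_singleton_iff] at hs; subst hs
    simpa using hsle 0
  · intro h d hd
    refine ⟨_, rfl, ?_⟩
    intro j
    by_cases hj : j = 0
    · subst hj; simpa using h d hd
    · simp [Finsupp.single_apply, Ne.symm hj]

lemma mul_xpow_mem_mpow {p : P} {a b : ℕ} (h : p * X 0 ^ a ∈ (mxy k) ^ b) :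
    p ∈ (mxy k) ^ (b - a) := by
  rw [mem_mpow] at h ⊢
  intro d hd
  have hmem : (d + Finsupp.single 0 a) ∈ (p * X 0 ^ a).support := by
    rw [X_pow_eq_monomial, mem_support_iff, coeff_mul_monomial, mul_one]
    exact mem_support_iff.1 hd
  have := h _ hmem
  simp only [degm, Finsupp.add_apply, Finsupp.single_eq_same,
    Finsupp.single_eq_of_ne' (by decide : (0 : Fin 2) ≠ 1)] at this ⊢
  omega

lemma mul_ypow_mem_xpow {p : P} {a j : ℕ} (h : p * X 1 ^ j ∈ Ideal.span {(X 0 : P) ^ a}) :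
    p ∈ Ideal.span {(X 0 : P) ^ a} := by
  rw [mem_span_xpow] at h ⊢
  intro d hd
  have hmem : (d + Finsupp.single 1 j) ∈ (p * X 1 ^ j).support := by
    rw [X_pow_eq_monomial, mem_support_iff, coeff_mul_monomial, mul_one]
    exact mem_support_iff.1 hd
  have := h _ hmem
  simpa [Finsupp.single_apply] using this

lemma mem_mxy_iff {p : P} : p ∈ mxy k ↔ constantCoeff p = 0 := by
  have : (mxy k) = (mxy k) ^ 1 := (pow_one _).symm
  rw [this, mem_mpow]
  constructor
  · intro h
    by_contra hc
    have h0 : (0 : Fin 2 →₀ ℕ) ∈ p.support := by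
      rw [mem_support_iff]
      simpa [constantCoeff_eq] using hc
    simpa [degm] using h 0 h0
  · intro h d hd
    by_contra hc
    have hd0 : d = 0 := by
      simp only [degm] at hc
      ext i
      fin_cases i <;> simp <;> omega
    subst hd0
    rw [mem_support_iff] at hd
    exact hd (by simpa [constantCoeff_eq] using h)

end LayerOne


section Loc
variable (k : Type*) [Field k] [(mxy k).IsPrime]
local notation "P" => MvPolynomial (Fin 2) k
local notation "φ" => algebraMap (MvPolynomial (Fin 2) k) (Rxy k)

lemma phi_inj : Function.Injective (algebraMap (MvPolynomial (Fin 2) k) (Rxy k)) :=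
  IsLocalization.injective _ (Ideal.primeCompl_le_nonZeroDivisors (mxy k))

lemma exists_inverse_mod {s : P} (hs : s ∉ mxy k) (c : ℕ) :
    ∃ t : P, 1 - s * t ∈ (mxy k) ^ c := by
  set α := constantCoeff s with hα
  have hα0 : α ≠ 0 := fun h => hs (mem_mxy_iff.2 h)
  set e₀ : P := (C α - s) * C α⁻¹ with he₀
  have he₀m : e₀ ∈ mxy k := by
    apply Ideal.mul_mem_right
    rw [mem_mxy_iff]
    simp [hα]
  have hs' : s * C α⁻¹ = 1 - e₀ := by
    rw [he₀]
    rw [sub_mul, ← C_mul, mul_inv_cancel₀ hα0]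
    ring_nf
    simp
  refine ⟨C α⁻¹ * (∑ i ∈ Finset.range c, e₀ ^ i), ?_⟩
  have hg := geom_sum_mul e₀ c
  have : 1 - s * (C α⁻¹ * (∑ i ∈ Finset.range c, e₀ ^ i)) = e₀ ^ c := by
    have : s * (C α⁻¹ * (∑ i ∈ Finset.range c, e₀ ^ i))
        = (1 - e₀) * (∑ i ∈ Finset.range c, e₀ ^ i) := by rw [← mul_assoc, hs']
    rw [this]
    linear_combination hg
  rw [this]
  exact Ideal.pow_mem_pow he₀m c

lemma comap_map_mpow (c : ℕ) :
    Ideal.comap (algebraMap P (Rxy k)) (((mxy k) ^ c).map (algebraMap P (Rxy k)))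
      = (mxy k) ^ c := by
  refine le_antisymm ?_ Ideal.le_comap_map
  intro p hp
  rw [Ideal.mem_comap, IsLocalization.mem_map_algebraMap_iff (mxy k).primeCompl] at hp
  obtain ⟨⟨q, s⟩, hqs⟩ := hp
  rw [← map_mul] at hqs
  have h1 : p * (s : P) ∈ (mxy k) ^ c := by
    rw [phi_inj k hqs]
    exact q.2
  obtain ⟨t, ht⟩ := exists_inverse_mod k s.2 c
  have : p = p * (1 - (s : P) * t) + (p * s) * t := by ring
  rw [this]
  exact Ideal.add_mem _ (Ideal.mul_mem_left _ _ ht) (Ideal.mul_mem_right _ _ h1)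

lemma quot_mk_comp_surjective (c : ℕ) :
    Function.Surjective
      ((Ideal.Quotient.mk (((mxy k) ^ c).map (algebraMap P (Rxy k)))).comp
        (algebraMap P (Rxy k))) := by
  intro z
  obtain ⟨z, rfl⟩ := Ideal.Quotient.mk_surjective z
  obtain ⟨⟨p, s⟩, hps⟩ := IsLocalization.surj (mxy k).primeCompl z
  obtain ⟨t, ht⟩ := exists_inverse_mod k s.2 c
  refine ⟨p * t, ?_⟩
  rw [RingHom.comp_apply, Ideal.Quotient.eq]
  have : (algebraMap P (Rxy k)) (p * t) - z
      = z * ((algebraMap P (Rxy k)) ((s : P) * t) - 1) := by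
    rw [map_mul, map_mul, ← hps]; ring
  rw [this]
  refine Ideal.mul_mem_left _ _ ?_
  have : (algebraMap P (Rxy k)) ((s : P) * t) - 1
      = -(algebraMap P (Rxy k)) (1 - (s:P) * t) := by
    rw [map_sub, map_one]; ring
  rw [this]
  exact neg_mem (Ideal.mem_map_of_mem _ ht)

/-- The ring isomorphism `P/m^c ≃ R/m_R^c`. -/
noncomputable def quotEquiv (c : ℕ) :
    (P ⧸ ((mxy k) ^ c)) ≃+* (Rxy k ⧸ (((mxy k) ^ c).map (algebraMap P (Rxy k)))) := by
  refine (Ideal.quotEquivOfEq ?_).trans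
    (RingHom.quotientKerEquivOfSurjective (quot_mk_comp_surjective k c))
  rw [← RingHom.comap_ker, Ideal.mk_ker, comap_map_mpow]

end Loc

section Loc3
variable (k : Type*) [Field k] [(mxy k).IsPrime]
local notation "P" => MvPolynomial (Fin 2) k
local notation "φ" => algebraMap (MvPolynomial (Fin 2) k) (Rxy k)

lemma span_xx_pow_eq (a : ℕ) :
    Ideal.span {xx k} ^ a = (Ideal.span {(X 0 : P) ^ a}).map φ := by
  rw [Ideal.span_singleton_pow, Ideal.map_span, Set.image_singleton, map_pow]

lemma maxIdeal_eq : IsLocalRing.maximalIdeal (Rxy k) = (mxy k).map φ :=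
  (Localization.AtPrime.map_eq_maximalIdeal).symm

lemma maxIdeal_pow_eq (b : ℕ) :
    (IsLocalRing.maximalIdeal (Rxy k)) ^ b = ((mxy k) ^ b).map φ := by
  rw [maxIdeal_eq, Ideal.map_pow]

lemma xpow_mem_mpow (a : ℕ) : (X 0 : P) ^ a ∈ (mxy k) ^ a := by
  rw [X_pow_eq_monomial]
  apply monomial_mem_mpow
  simp [degm]

lemma yy_mem_max : yy k ∈ IsLocalRing.maximalIdeal (Rxy k) := by
  rw [maxIdeal_eq]
  exact Ideal.mem_map_of_mem _ (Ideal.subset_span (by simp))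

/-- transfer of an `r * φ(g) ∈ map J → r ∈ map J'` statement from `P` to the localization -/
lemma map_transfer {g : P} {J J' : Ideal P}
    (H : ∀ p : P, p * g ∈ J → p ∈ J') {r : Rxy k} (hr : r * φ g ∈ J.map φ) :
    r ∈ J'.map φ := by
  rw [IsLocalization.mem_map_algebraMap_iff (mxy k).primeCompl] at hr
  obtain ⟨⟨q, s⟩, hqs⟩ := hr
  obtain ⟨⟨p, t⟩, hpt⟩ := IsLocalization.surj (mxy k).primeCompl r
  have key : (p * (s : P)) * g = (q : P) * t := by
    apply phi_inj k
    push_cast [map_mul]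
    calc φ p * φ (s : P) * φ g = (r * φ (t : P)) * φ (s:P) * φ g := by rw [hpt]
    _ = (r * φ g * φ (s:P)) * φ (t : P) := by ring
    _ = φ (q : P) * φ (t:P) := by rw [hqs]
  have hmem : p * (s : P) ∈ J' := H _ (key ▸ Ideal.mul_mem_right _ _ q.2)
  have hunit : IsUnit (φ ((t : P) * (s : P))) :=
    IsLocalization.map_units (Rxy k) (t * s)
  obtain ⟨u, hu⟩ := hunit
  have hru : r * φ ((t:P) * (s:P)) ∈ J'.map φ := by
    have : r * φ ((t:P) * (s:P)) = φ (p * (s:P)) := by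
      rw [map_mul, map_mul, ← hpt]; ring
    rw [this]
    exact Ideal.mem_map_of_mem _ hmem
  have hr' : r = ↑u⁻¹ * (r * φ ((t:P) * (s:P))) := by
    rw [← hu]
    calc r = (↑u⁻¹ * ↑u) * r := by rw [u.inv_mul, one_mul]
    _ = ↑u⁻¹ * (r * ↑u) := by ring
  rw [hr']
  exact Ideal.mul_mem_left _ _ hru

lemma mul_xx_pow_mem {a b : ℕ} (hab : a ≤ b) (r : Rxy k) :
    r * (xx k) ^ a ∈ ((mxy k) ^ b).map φ ↔ r ∈ ((mxy k) ^ (b - a)).map φ := by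
  constructor
  · intro h
    refine map_transfer k (g := (X 0 : P) ^ a) (fun p hp => mul_xpow_mem_mpow hp) ?_
    rwa [map_pow]
  · intro h
    have : r * (xx k) ^ a ∈ (((mxy k) ^ (b-a)).map φ) * (((mxy k) ^ a).map φ) := by
      refine Ideal.mul_mem_mul h ?_
      rw [← map_pow]
      exact Ideal.mem_map_of_mem _ (xpow_mem_mpow k a)
    rwa [← Ideal.map_mul, ← pow_add, Nat.sub_add_cancel hab] at this

lemma mul_yy_pow_mem {a j : ℕ} (r : Rxy k)
    (h : r * (yy k) ^ j ∈ Ideal.span {xx k} ^ a) : r ∈ Ideal.span {xx k} ^ a := by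
  rw [span_xx_pow_eq] at h ⊢
  refine map_transfer k (g := (X 1 : P) ^ j) (fun p hp => mul_ypow_mem_xpow hp) ?_
  rwa [map_pow]

/-- Statement 1: the saturation computation. -/
lemma sat_eq {a b : ℕ} :
    sat (Ideal.span {xx k} ^ a ⊓ (IsLocalRing.maximalIdeal (Rxy k)) ^ b)
      (IsLocalRing.maximalIdeal (Rxy k)) = Ideal.span {xx k} ^ a := by
  apply le_antisymm
  · rw [sat]
    refine iSup_le fun j => ?_
    intro r hr
    have hy : (yy k) ^ j ∈ (IsLocalRing.maximalIdeal (Rxy k)) ^ j :=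
      Ideal.pow_mem_pow (yy_mem_max k) j
    have := Submodule.mem_colon.1 hr _ hy
    rw [smul_eq_mul] at this
    exact mul_yy_pow_mem k r this.1
  · refine le_trans ?_ (le_iSup _ b)
    intro r hr
    rw [Submodule.mem_colon]
    intro p hp
    rw [smul_eq_mul]
    exact ⟨Ideal.mul_mem_right _ _ hr, Ideal.mul_mem_left _ _ hp⟩

end Loc3


section OrderIsos

/-- Submodules of `R⧸I` over `R` are the same as ideals of `R⧸I`. -/
def restrictScalarsOrderIso (R : Type*) [CommRing R] (I : Ideal R) :
    Submodule (R ⧸ I) (R ⧸ I) ≃o Submodule R (R ⧸ I) where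
  toFun N := N.restrictScalars R
  invFun N :=
    { carrier := N
      zero_mem' := N.zero_mem
      add_mem' := fun h1 h2 => N.add_mem h1 h2
      smul_mem' := by
        rintro c x hx
        obtain ⟨c, rfl⟩ := Ideal.Quotient.mk_surjective c
        obtain ⟨y, rfl⟩ := Ideal.Quotient.mk_surjective x
        have : (Ideal.Quotient.mk I c) • (Ideal.Quotient.mk I y)
            = c • (Ideal.Quotient.mk I y) := by
          rw [smul_eq_mul, ← map_mul]
          rfl
        rw [this]
        exact N.smul_mem c hx }
  left_inv N := by ext x; rfl
  right_inv N := by ext x; rfl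
  map_rel_iff' := Iff.rfl

end OrderIsos

section Loc4
variable (k : Type*) [Field k] [(mxy k).IsPrime]
local notation "P" => MvPolynomial (Fin 2) k
local notation "φ" => algebraMap (MvPolynomial (Fin 2) k) (Rxy k)

variable (a b : ℕ)

local notation "AA" => Ideal.span {xx k} ^ a
local notation "BB" => (IsLocalRing.maximalIdeal (Rxy k)) ^ b

lemma xx_pow_mem_A : (xx k) ^ a ∈ AA := by
  rw [Ideal.span_singleton_pow]
  exact Ideal.mem_span_singleton_self _

/-- the linear map `R → A/(A ⊓ B)`, `r ↦ r · x^a`. -/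
noncomputable def gmap : Rxy k →ₗ[Rxy k] idealQuot AA (AA ⊓ BB) :=
  (Submodule.mkQ _) ∘ₗ
    (LinearMap.toSpanSingleton (Rxy k) _ ⟨(xx k) ^ a, xx_pow_mem_A k a⟩)

lemma gmap_surjective : Function.Surjective (gmap k a b) := by
  intro z
  obtain ⟨⟨w, hw⟩, rfl⟩ := Submodule.mkQ_surjective _ z
  have hw' : w ∈ Ideal.span {(xx k) ^ a} := by
    rwa [← Ideal.span_singleton_pow]
  obtain ⟨r, hr⟩ := Submodule.mem_span_singleton.1 hw'
  exact ⟨r, by simp only [gmap, LinearMap.comp_apply, LinearMap.toSpanSingleton_apply,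
    SetLike.mk_smul_mk, hr]⟩

lemma gmap_ker (hab : a ≤ b) :
    LinearMap.ker (gmap k a b) = ((mxy k) ^ (b - a)).map φ := by
  ext r
  rw [LinearMap.mem_ker, gmap, LinearMap.comp_apply, Submodule.mkQ_apply,
    Submodule.Quotient.mk_eq_zero, LinearMap.toSpanSingleton_apply]
  have : (r • (⟨(xx k) ^ a, xx_pow_mem_A k a⟩ : ↥(AA))) ∈ Submodule.comap (AA).subtype (AA ⊓ BB)
      ↔ r * (xx k) ^ a ∈ (AA ⊓ BB : Ideal (Rxy k)) := by
    rw [Submodule.mem_comap]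
    rfl
  rw [this]
  constructor
  · intro h
    have := h.2
    rw [maxIdeal_pow_eq] at this
    exact (mul_xx_pow_mem k hab r).1 this
  · intro h
    refine ⟨Ideal.mul_mem_left _ _ ?_, ?_⟩
    · exact xx_pow_mem_A k a
    · rw [maxIdeal_pow_eq]
      exact (mul_xx_pow_mem k hab r).2 h

/-- The key linear equivalence `A/(A⊓B) ≃ R ⧸ m^(b-a)`. -/
noncomputable def quotEquivLin (hab : a ≤ b) :
    (Rxy k ⧸ (((mxy k) ^ (b - a)).map φ)) ≃ₗ[Rxy k] idealQuot AA (AA ⊓ BB) :=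
  (Submodule.quotEquivOfEq _ _ (gmap_ker k a b hab).symm).trans
    ((gmap k a b).quotKerEquivOfSurjective (gmap_surjective k a b))

/-- chain of order isomorphisms down to ideals of `P ⧸ m^c`. -/
noncomputable def bigOrderIso (hab : a ≤ b) :
    Submodule (Rxy k) (idealQuot AA (AA ⊓ BB)) ≃o
      Ideal (MvPolynomial (Fin 2) k ⧸ ((mxy k) ^ (b - a))) :=
  ((Submodule.orderIsoMapComap (quotEquivLin k a b hab).symm).trans
    (restrictScalarsOrderIso (Rxy k) (((mxy k) ^ (b - a)).map φ)).symm).trans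
    (Ideal.relIsoOfBijective (quotEquiv k (b - a)) (quotEquiv k (b-a)).bijective)

end Loc4


/-- triangular numbers -/
def Tn (c : ℕ) : ℕ := c * (c + 1) / 2

lemma Tn_succ (c : ℕ) : Tn (c + 1) = Tn c + (c + 1) := by
  obtain ⟨m, hm⟩ := Nat.even_mul_succ_self c
  obtain ⟨m', hm'⟩ := Nat.even_mul_succ_self (c + 1)
  have h : (c + 1) * (c + 1 + 1) = c * (c + 1) + 2 * (c + 1) := by ring
  unfold Tn
  omega

lemma two_Tn (c : ℕ) : 2 * Tn c = c * (c + 1) := by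
  obtain ⟨m, hm⟩ := Nat.even_mul_succ_self c
  unfold Tn
  omega

section Counting
variable (k : Type*) [Field k]
local notation "P" => MvPolynomial (Fin 2) k

/-- exponents of monomials of degree `< c` -/
def Dc (c : ℕ) : Type := {d : Fin 2 →₀ ℕ // degm d < c}

/-- `Dc` as pairs of naturals. -/
noncomputable def dcEquiv (c : ℕ) : Dc c ≃ ((i : Fin c) × Fin (c - i)) := by
  refine Equiv.trans
    (Equiv.subtypeEquiv (q := fun q : ℕ × ℕ => q.1 + q.2 < c)
      (Finsupp.equivFunOnFinite.trans (piFinTwoEquiv fun _ => ℕ)) fun d => Iff.rfl) ?_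
  exact
    { toFun := fun q => ⟨⟨q.1.1, by have := q.2; omega⟩, ⟨q.1.2, by have := q.2; simp only [Fin.val_mk]; omega⟩⟩
      invFun := fun s => ⟨(s.1, s.2), by have := s.2.2; omega⟩
      left_inv := by rintro ⟨⟨i, j⟩, h⟩; rfl
      right_inv := by rintro ⟨⟨i, hi⟩, ⟨j, hj⟩⟩; rfl }

noncomputable instance (c : ℕ) : Fintype (Dc c) := Fintype.ofEquiv _ (dcEquiv c).symm

lemma card_Dc (c : ℕ) : Fintype.card (Dc c) = Tn c := by
  rw [Fintype.card_congr (dcEquiv c), Fintype.card_sigma]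
  simp only [Fintype.card_fin]
  rw [Fin.sum_univ_eq_sum_range]
  have h1 : ∑ i ∈ Finset.range c, (c - i) = ∑ i ∈ Finset.range c, (i + 1) := by
    rw [← Finset.sum_range_reflect]
    exact Finset.sum_congr rfl fun i hi => by
      rw [Finset.mem_range] at hi; omega
  rw [h1]
  have h2 : ∑ i ∈ Finset.range c, (i + 1) = ∑ i ∈ Finset.range (c + 1), i := by
    rw [Finset.sum_range_succ' (fun i => i) c]
    simp
  rw [h2, Finset.sum_range_id]
  unfold Tn
  simp [Nat.mul_comm]

/-- The coefficient-restriction linear map. -/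
noncomputable def Fmap (c : ℕ) : P →ₗ[k] (Dc c →₀ k) :=
  (Finsupp.lcomapDomain (fun d : Dc c => d.1) (fun x y h => Subtype.ext h)) ∘ₗ
    ((basisMonomials (Fin 2) k).repr : P ≃ₗ[k] ((Fin 2 →₀ ℕ) →₀ k)).toLinearMap

lemma Fmap_apply (c : ℕ) (p : P) (d : Dc c) : Fmap k c p d = coeff d.1 p := rfl

lemma Fmap_surjective (c : ℕ) : Function.Surjective (Fmap k c) := by
  intro v
  induction v using Finsupp.induction_linear with
  | zero => exact ⟨0, map_zero _⟩
  | add f g hf hg =>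
    obtain ⟨p, hp⟩ := hf; obtain ⟨q, hq⟩ := hg
    exact ⟨p + q, by rw [map_add, hp, hq]⟩
  | single d r =>
    refine ⟨monomial d.1 r, ?_⟩
    ext d'
    rw [Fmap_apply, coeff_monomial]
    classical
    rcases eq_or_ne d d' with rfl | hne
    · simp
    · rw [if_neg (fun h => hne (Subtype.ext h)), Finsupp.single_apply, if_neg hne]

lemma Fmap_ker (c : ℕ) :
    LinearMap.ker (Fmap k c) = ((mxy k) ^ c : Ideal P).restrictScalars k := by
  ext p
  rw [LinearMap.mem_ker, Submodule.restrictScalars_mem, mem_mpow]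
  constructor
  · intro h d hd
    by_contra hc
    have : Fmap k c p ⟨d, by omega⟩ = coeff d p := Fmap_apply k c p _
    rw [h] at this
    exact (mem_support_iff.1 hd) this.symm
  · intro h
    ext d
    rw [Fmap_apply]
    by_contra hc
    have hd : d.1 ∈ p.support := mem_support_iff.2 (by simpa using hc)
    have := h d.1 hd
    have := d.2
    omega

/-- `P ⧸ m^c` is `k`-linearly equivalent to functions on `Dc`. -/
noncomputable def quotMvEquiv (c : ℕ) :
    (P ⧸ ((mxy k) ^ c : Ideal P)) ≃ₗ[k] (Dc c →₀ k) :=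
  ((Submodule.Quotient.restrictScalarsEquiv k ((mxy k) ^ c : Ideal P)).symm.trans
    (Submodule.quotEquivOfEq _ _ (Fmap_ker k c).symm)).trans
    ((Fmap k c).quotKerEquivOfSurjective (Fmap_surjective k c))

instance (c : ℕ) : FiniteDimensional k (P ⧸ ((mxy k) ^ c : Ideal P)) :=
  Module.Finite.equiv (quotMvEquiv k c).symm

lemma finrank_quotMv (c : ℕ) :
    Module.finrank k (P ⧸ ((mxy k) ^ c : Ideal P)) = Tn c := by
  rw [(quotMvEquiv k c).finrank_eq, Module.finrank_finsupp_self, card_Dc]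

end Counting

section UpperBound

lemma fin_chain_le {n : ℕ} (f : Fin (n + 1) → ℕ) (hf : StrictMono f) :
    n + f 0 ≤ f (Fin.last n) := by
  have key : ∀ m (h : m < n + 1), m + f 0 ≤ f ⟨m, h⟩ := by
    intro m
    induction m with
    | zero => intro h; simp [show (⟨0, h⟩ : Fin (n+1)) = 0 from rfl]
    | succ t ih =>
      intro h
      have h1 := ih (by omega)
      have h2 : f ⟨t, by omega⟩ < f ⟨t + 1, h⟩ := hf (by simp [Fin.lt_def])
      omega
  exact key n (by omega)

lemma ltseries_length_le (K A M : Type*) [Field K] [CommRing A] [AddCommGroup M]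
    [Module A M] [Module K M] [SMul K A] [IsScalarTower K A M] [FiniteDimensional K M]
    (p : LTSeries (Submodule A M)) : p.length ≤ Module.finrank K M := by
  have hmono : StrictMono (fun N : Submodule A M => N.restrictScalars K) := by
    intro N N' h
    refine lt_of_le_of_ne (fun x hx => h.le hx) ?_
    exact fun e => h.ne (Submodule.restrictScalars_injective K A M e)
  set f : Fin (p.length + 1) → ℕ :=
    fun i => Module.finrank K ((p.toFun i).restrictScalars K) with hf
  have hfs : StrictMono f := by
    intro i j hij
    exact Submodule.finrank_lt_finrank_of_lt (hmono (p.strictMono hij))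
  have := fin_chain_le f hfs
  have hlast : f (Fin.last p.length) ≤ Module.finrank K M := Submodule.finrank_le _
  omega

end UpperBound

section Chain

/-- list of exponent pairs in decreasing-degree order -/
def Llist : ℕ → List (ℕ × ℕ)
  | 0 => []
  | (c + 1) => ((List.range (c + 1)).map fun i => (i, c - i)) ++ Llist c

lemma Llist_length (c : ℕ) : (Llist c).length = Tn c := by
  induction c with
  | zero => simp [Llist, Tn]
  | succ c ih => simp [Llist, ih, Tn_succ]; omega

lemma Llist_deg {c : ℕ} {e : ℕ × ℕ} (he : e ∈ Llist c) : e.1 + e.2 < c := by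
  induction c with
  | zero => simp [Llist] at he
  | succ c ih =>
    rw [Llist, List.mem_append] at he
    rcases he with he | he
    · obtain ⟨i, hi, rfl⟩ := List.mem_map.1 he
      rw [List.mem_range] at hi
      simp only []
      omega
    · exact lt_trans (ih he) (by omega)

lemma Llist_pairwise (c : ℕ) :
    (Llist c).Pairwise (fun x y => ¬(x.1 ≤ y.1 ∧ x.2 ≤ y.2)) := by
  induction c with
  | zero => simp [Llist]
  | succ c ih =>
    rw [Llist, List.pairwise_append]
    refine ⟨?_, ih, ?_⟩
    · rw [List.pairwise_iff_getElem]
      intro i j hi hj hij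
      simp only [List.getElem_map, List.getElem_range, List.length_map,
        List.length_range] at hi hj ⊢
      omega
    · intro x hx y hy
      obtain ⟨i, hi, rfl⟩ := List.mem_map.1 hx
      rw [List.mem_range] at hi
      have := Llist_deg hy
      simp only []
      omega

end Chain

section KChain
variable (k : Type*) [Field k]
local notation "P" => MvPolynomial (Fin 2) k

/-- pairs to finsupp exponents -/
noncomputable def toF (e : ℕ × ℕ) : Fin 2 →₀ ℕ := Finsupp.single 0 e.1 + Finsupp.single 1 e.2

lemma toF_apply0 (e : ℕ × ℕ) : toF e 0 = e.1 := by
  simp [toF, Finsupp.single_apply]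

lemma toF_apply1 (e : ℕ × ℕ) : toF e 1 = e.2 := by
  simp [toF, Finsupp.single_apply]

lemma degm_toF (e : ℕ × ℕ) : degm (toF e) = e.1 + e.2 := by
  rw [degm, toF_apply0, toF_apply1]

/-- the chain of monomial ideals -/
noncomputable def Kchain (c t : ℕ) : Ideal P :=
  Ideal.span ((fun d => monomial d (1:k)) ''
    ({d | c ≤ degm d} ∪ toF '' {e | e ∈ (Llist c).take t}))

lemma mpow_le_Kchain (c t : ℕ) : (mxy k) ^ c ≤ Kchain k c t := by
  rw [mpow_eq_span]
  exact Ideal.span_mono (Set.image_mono Set.subset_union_left)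

lemma Kchain_mono (c : ℕ) {s t : ℕ} (h : s ≤ t) : Kchain k c s ≤ Kchain k c t := by
  apply Ideal.span_mono
  apply Set.image_mono
  apply Set.union_subset_union_right
  apply Set.image_mono
  intro e he
  simp only [Set.mem_setOf_eq] at he ⊢
  have heq : (Llist c).take s = ((Llist c).take t).take s := by
    rw [List.take_take, min_eq_left h]
  rw [heq] at he
  exact List.take_subset _ _ he

lemma Kchain_lt (c : ℕ) {t : ℕ} (ht : t < Tn c) : Kchain k c t < Kchain k c (t + 1) := by
  have hlen : t < (Llist c).length := by rw [Llist_length]; exact ht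
  refine lt_of_le_of_ne (Kchain_mono k c (by omega)) ?_
  intro heq
  have hmem : monomial (toF ((Llist c)[t])) (1:k) ∈ Kchain k c (t + 1) := by
    apply Ideal.subset_span
    refine ⟨toF ((Llist c)[t]), Or.inr ⟨(Llist c)[t], ?_, rfl⟩, rfl⟩
    exact List.mem_take_iff_getElem.2 ⟨t, by omega, rfl⟩
  rw [← heq, Kchain, mem_ideal_span_monomial_image] at hmem
  have hsupp : toF ((Llist c)[t]) ∈ (monomial (toF ((Llist c)[t])) (1:k)).support := by
    classical
    rw [support_monomial, if_neg one_ne_zero]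
    exact Finset.mem_singleton_self _
  obtain ⟨si, hsi, hle⟩ := hmem _ hsupp
  rcases hsi with hhi | ⟨e, he, rfl⟩
  · have h1 : degm si ≤ degm (toF ((Llist c)[t])) := degm_mono hle
    rw [degm_toF] at h1
    have h2 := Llist_deg (List.getElem_mem hlen)
    simp only [Set.mem_setOf_eq] at hhi
    omega
  · simp only [Set.mem_setOf_eq] at he
    obtain ⟨i', hm, hEq⟩ := List.mem_take_iff_getElem.1 he
    have hp := List.pairwise_iff_getElem.1 (Llist_pairwise c) i' t
      (by omega) hlen (by omega)
    rw [hEq] at hp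
    have h0 := (Finsupp.le_def.1 hle) 0
    have h1 := (Finsupp.le_def.1 hle) 1
    rw [toF_apply0, toF_apply0] at h0
    rw [toF_apply1, toF_apply1] at h1
    exact hp ⟨h0, h1⟩

end KChain

section KrullDimCompute
variable (k : Type*) [Field k]
local notation "P" => MvPolynomial (Fin 2) k

/-- chain of ideals in the quotient -/
noncomputable def Kq (c t : ℕ) : Ideal (P ⧸ ((mxy k) ^ c : Ideal P)) :=
  (Kchain k c t).map (Ideal.Quotient.mk _)

lemma Kq_strict (c : ℕ) {t : ℕ} (ht : t < Tn c) : Kq k c t < Kq k c (t + 1) := by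
  refine lt_of_le_of_ne (Ideal.map_mono (Kchain_lt k c ht).le) ?_
  intro heq
  have hc := congrArg (Ideal.comap (Ideal.Quotient.mk ((mxy k) ^ c : Ideal P))) heq
  rw [Kq, Kq, Ideal.comap_map_of_surjective _ Ideal.Quotient.mk_surjective,
    Ideal.comap_map_of_surjective _ Ideal.Quotient.mk_surjective,
    ← RingHom.ker_eq_comap_bot, Ideal.mk_ker,
    sup_eq_left.2 (mpow_le_Kchain k c t),
    sup_eq_left.2 (mpow_le_Kchain k c (t + 1))] at hc
  exact (Kchain_lt k c ht).ne hc

lemma krullDim_lower (c : ℕ) :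
    ((Tn c : ℕ∞) : WithBot ℕ∞) ≤ Order.krullDim (Ideal (P ⧸ ((mxy k) ^ c : Ideal P))) := by
  let ser : LTSeries (Ideal (P ⧸ ((mxy k) ^ c : Ideal P))) :=
    ⟨Tn c, fun t => Kq k c t.val, fun i => by
      simp only [Fin.coe_castSucc, Fin.val_succ]
      exact Kq_strict k c i.isLt⟩
  simpa using Order.LTSeries.length_le_krullDim ser

lemma krullDim_upper (c : ℕ) :
    Order.krullDim (Ideal (P ⧸ ((mxy k) ^ c : Ideal P))) ≤ ((Tn c : ℕ∞) : WithBot ℕ∞) := by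
  rw [Order.krullDim_eq_iSup_length]
  rw [WithBot.coe_le_coe]
  refine iSup_le fun p => ?_
  rw [Nat.cast_le]
  calc p.length ≤ Module.finrank k (P ⧸ ((mxy k) ^ c : Ideal P)) :=
        ltseries_length_le k _ _ p
  _ = Tn c := finrank_quotMv k c

lemma krullDim_ideal_quot (c : ℕ) :
    Order.krullDim (Ideal (P ⧸ ((mxy k) ^ c : Ideal P))) = ((Tn c : ℕ∞) : WithBot ℕ∞) :=
  le_antisymm (krullDim_upper k c) (krullDim_lower k c)

end KrullDimCompute


section Assemble
variable (k : Type*) [Field k] [(mxy k).IsPrime]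
local notation "P" => MvPolynomial (Fin 2) k

lemma mlength_eq {a b : ℕ} (hab : a ≤ b) :
    mlength (Rxy k) (idealQuot (Ideal.span {xx k} ^ a)
        (Ideal.span {xx k} ^ a ⊓ (IsLocalRing.maximalIdeal (Rxy k)) ^ b))
      = (Tn (b - a) : ℕ∞) := by
  rw [mlength, Order.krullDim_eq_of_orderIso (bigOrderIso k a b hab),
    krullDim_ideal_quot k (b - a)]
  rfl

end Assemble

section Analysis
open Filter Real

lemma ceil_le_ceil_pi (n : ℕ) : ⌈(n : ℝ) * Real.pi⌉₊ ≤ ⌈(2 * n : ℝ) * Real.pi⌉₊ := by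
  apply Nat.ceil_le_ceil
  nlinarith [Real.pi_pos, Nat.cast_nonneg (α := ℝ) n]

lemma cdiv_cast (n : ℕ) :
    ((⌈(2 * n : ℝ) * Real.pi⌉₊ - ⌈(n : ℝ) * Real.pi⌉₊ : ℕ) : ℝ)
      = (⌈(2 * n : ℝ) * Real.pi⌉₊ : ℝ) - (⌈(n : ℝ) * Real.pi⌉₊ : ℝ) := by
  rw [Nat.cast_sub (ceil_le_ceil_pi n)]

lemma tendsto_cdiv :
    Tendsto (fun n : ℕ => ((⌈(2 * n : ℝ) * Real.pi⌉₊ - ⌈(n : ℝ) * Real.pi⌉₊ : ℕ) : ℝ) / n)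
      atTop (nhds Real.pi) := by
  have hlow : Tendsto (fun n : ℕ => Real.pi - 1 / n) atTop (nhds Real.pi) := by
    simpa using (tendsto_const_nhds (x := Real.pi)).sub tendsto_one_div_atTop_nhds_zero_nat
  have hhigh : Tendsto (fun n : ℕ => Real.pi + 1 / n) atTop (nhds Real.pi) := by
    simpa using (tendsto_const_nhds (x := Real.pi)).add tendsto_one_div_atTop_nhds_zero_nat
  refine tendsto_of_tendsto_of_tendsto_of_le_of_le' hlow hhigh ?_ ?_
  · filter_upwards [eventually_ge_atTop 1] with n hn
    have hn' : (0:ℝ) < n := by exact_mod_cast hn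
    have hb : (2 * n : ℝ) * Real.pi ≤ (⌈(2 * n : ℝ) * Real.pi⌉₊ : ℝ) := Nat.le_ceil _
    have ha : (⌈(n : ℝ) * Real.pi⌉₊ : ℝ) < (n : ℝ) * Real.pi + 1 :=
      Nat.ceil_lt_add_one (by positivity)
    rw [le_div_iff₀ hn', cdiv_cast]
    have h1n : (1 / (n:ℝ)) * n = 1 := by field_simp
    have he1 : (Real.pi - 1/(n:ℝ)) * n = Real.pi * n - (1/(n:ℝ)) * n := by ring
    have he2 : (2 * (n:ℝ)) * Real.pi = 2 * (Real.pi * n) := by ring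
    have he3 : (n:ℝ) * Real.pi = Real.pi * n := by ring
    linarith
  · filter_upwards [eventually_ge_atTop 1] with n hn
    have hn' : (0:ℝ) < n := by exact_mod_cast hn
    have hb : (⌈(2 * n : ℝ) * Real.pi⌉₊ : ℝ) < (2 * n : ℝ) * Real.pi + 1 :=
      Nat.ceil_lt_add_one (by positivity)
    have ha : (n : ℝ) * Real.pi ≤ (⌈(n : ℝ) * Real.pi⌉₊ : ℝ) := Nat.le_ceil _
    rw [div_le_iff₀ hn', cdiv_cast]
    have h1n : (1 / (n:ℝ)) * n = 1 := by field_simp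
    have he1 : (Real.pi + 1/(n:ℝ)) * n = Real.pi * n + (1/(n:ℝ)) * n := by ring
    have he2 : (2 * (n:ℝ)) * Real.pi = 2 * (Real.pi * n) := by ring
    have he3 : (n:ℝ) * Real.pi = Real.pi * n := by ring
    linarith

lemma tendsto_final :
    Tendsto (fun n : ℕ =>
        (((⌈(2 * n : ℝ) * Real.pi⌉₊ - ⌈(n : ℝ) * Real.pi⌉₊ : ℕ) : ℝ)
          * ((⌈(2 * n : ℝ) * Real.pi⌉₊ - ⌈(n : ℝ) * Real.pi⌉₊ : ℕ) + 1)) / n ^ 2)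
      atTop (nhds (Real.pi ^ 2)) := by
  have h2 : Tendsto (fun n : ℕ =>
      (((⌈(2 * n : ℝ) * Real.pi⌉₊ - ⌈(n : ℝ) * Real.pi⌉₊ : ℕ) : ℝ) / n)
        * ((((⌈(2 * n : ℝ) * Real.pi⌉₊ - ⌈(n : ℝ) * Real.pi⌉₊ : ℕ) : ℝ) / n + 1 / n)))
      atTop (nhds (Real.pi * Real.pi)) := by
    have := tendsto_cdiv.mul (tendsto_cdiv.add tendsto_one_div_atTop_nhds_zero_nat)
    simpa using this
  rw [pow_two]
  refine Tendsto.congr' ?_ h2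
  filter_upwards [eventually_ge_atTop 1] with n hn
  have hn' : (0:ℝ) < n := by exact_mod_cast hn
  rw [← add_div, div_mul_div_comm, ← pow_two]

end Analysis


open Filter in
/-- in `R = k[x,y]_{(x,y)}` with `m = (x,y)`, for
`I_n = (x)^{⌈nπ⌉} ∩ m^{⌈2nπ⌉}`, the saturation `I_n : m^∞` equals `(x)^{⌈nπ⌉}`, the
length of `(x)^{⌈nπ⌉}/I_n` equals `(⌈2nπ⌉−⌈nπ⌉)(⌈2nπ⌉−⌈nπ⌉+1)/2`, and
`2·λ_R((I_n : m^∞)/I_n)/n² → π²`. -/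
theorem stmt7 (k : Type*) [Field k] [(mxy k).IsPrime]
    (I : ℕ → Ideal (Rxy k))
    (hI : ∀ n, I n = Ideal.span {xx k} ^ (⌈(n : ℝ) * Real.pi⌉₊)
        ⊓ (IsLocalRing.maximalIdeal (Rxy k)) ^ (⌈(2 * n : ℝ) * Real.pi⌉₊)) :
    (∀ n, 1 ≤ n →
      sat (I n) (IsLocalRing.maximalIdeal (Rxy k))
        = Ideal.span {xx k} ^ (⌈(n : ℝ) * Real.pi⌉₊)) ∧
    (∀ n, 1 ≤ n →
      mlength (Rxy k) (idealQuot (sat (I n) (IsLocalRing.maximalIdeal (Rxy k))) (I n))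
        = (((⌈(2 * n : ℝ) * Real.pi⌉₊ - ⌈(n : ℝ) * Real.pi⌉₊)
            * (⌈(2 * n : ℝ) * Real.pi⌉₊ - ⌈(n : ℝ) * Real.pi⌉₊ + 1) / 2 : ℕ) : ℕ∞)) ∧
    Tendsto (fun n : ℕ =>
        (2 * ((mlength (Rxy k)
          (idealQuot (sat (I n) (IsLocalRing.maximalIdeal (Rxy k))) (I n))).toNat : ℝ)) / n ^ 2)
      atTop (nhds (Real.pi ^ 2)) := by
  have hsat : ∀ n : ℕ, sat (I n) (IsLocalRing.maximalIdeal (Rxy k))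
      = Ideal.span {xx k} ^ (⌈(n : ℝ) * Real.pi⌉₊) := by
    intro n
    rw [hI n]
    exact sat_eq k
  have hml : ∀ n : ℕ,
      mlength (Rxy k) (idealQuot (sat (I n) (IsLocalRing.maximalIdeal (Rxy k))) (I n))
        = (Tn (⌈(2 * n : ℝ) * Real.pi⌉₊ - ⌈(n : ℝ) * Real.pi⌉₊) : ℕ∞) := by
    intro n
    rw [hsat n, hI n]
    exact mlength_eq k (ceil_le_ceil_pi n)
  refine ⟨fun n _ => hsat n, fun n _ => by rw [hml n]; rfl, ?_⟩
  refine Tendsto.congr' ?_ tendsto_final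
  filter_upwards [] with n
  rw [hml n, ENat.toNat_coe]
  congr 1
  have h' : 2 * ((Tn (⌈(2 * n : ℝ) * Real.pi⌉₊ - ⌈(n : ℝ) * Real.pi⌉₊) : ℕ) : ℝ)
      = ((⌈(2 * n : ℝ) * Real.pi⌉₊ - ⌈(n : ℝ) * Real.pi⌉₊ : ℕ) : ℝ)
        * (((⌈(2 * n : ℝ) * Real.pi⌉₊ - ⌈(n : ℝ) * Real.pi⌉₊ : ℕ) : ℝ) + 1) := by
    exact_mod_cast two_Tn (⌈(2 * n : ℝ) * Real.pi⌉₊ - ⌈(n : ℝ) * Real.pi⌉₊)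
  ring_nf at h' ⊢
  linarith
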